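/- There exists a constant c > 0 such that for every invertible 3×3 real matrix B all of whose inverse's entries are nonnegative, and for every w ∈ ℝ³ with w₁ + w₂ + w₃ = 0, one has ‖proj(Bw)‖ ≥ c · α₂(B) · ‖w‖. -/

import Mathlib

open Matrix MeasureTheory Filter
open scoped ENNReal

noncomputable section

abbrev E3 : Type := EuclideanSpace ℝ (Fin 3)
abbrev Mat3 : Type := Matrix (Fin 3) (Fin 3) ℝ

/-- The action of a matrix on Euclidean 3-space. -/
noncomputable def matApply (A : Mat3) (x : E3) : E3 := Matrix.toEuclideanCLM (𝕜 := ℝ) A x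

/-- The largest singular value `α₁(A) = ‖A‖` (Euclidean operator norm). -/
noncomputable def sv1 (A : Mat3) : ℝ := ‖Matrix.toEuclideanCLM (𝕜 := ℝ) A‖

/-- The smallest singular value `α₃(A) = ‖A⁻¹‖⁻¹`. -/
noncomputable def sv3 (A : Mat3) : ℝ := (‖Matrix.toEuclideanCLM (𝕜 := ℝ) A⁻¹‖)⁻¹

/-- The middle singular value `α₂(A) = |det A| / (α₁(A) α₃(A))`. -/
noncomputable def sv2 (A : Mat3) : ℝ := |A.det| / (sv1 A * sv3 A)

/-- Falconer's singular value function `φ^s(A)`. -/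
noncomputable def svf (s : ℝ) (A : Mat3) : ℝ :=
  if s ≤ 1 then (sv1 A) ^ s
  else if s ≤ 2 then sv1 A * (sv2 A) ^ (s - 1)
  else if s ≤ 3 then sv1 A * sv2 A * (sv3 A) ^ (s - 2)
  else (sv1 A * sv2 A * sv3 A) ^ (s / 3)

/-- The three matrices `C₁, C₂, C₃` (with 0-based indexing). -/
def Cmat (p : ℝ) : Fin 3 → Mat3 :=
  ![!![1 - 2*p, -p, -p; 0, p, 0; 0, 0, p],
    !![p, 0, 0; -p, 1 - 2*p, -p; 0, 0, p],
    !![p, 0, 0; 0, p, 0; -p, -p, 1 - 2*p]]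

/-- The product `C_w = C_{j₁} ⋯ C_{jₙ}` along a word `w = (j₁, …, jₙ)`. -/
noncomputable def Cword (p : ℝ) {n : ℕ} (w : Fin n → Fin 3) : Mat3 :=
  ((List.ofFn w).map (Cmat p)).prod

/-- standard basis vectors of `E3` -/
noncomputable def eVec (i : Fin 3) : E3 := EuclideanSpace.single i 1

/-- The affine map `G_i(x) = C_i x + 2p·e_i`. -/
noncomputable def Gmap (p : ℝ) (i : Fin 3) (x : E3) : E3 :=
  matApply (Cmat p i) x + (2 * p) • eVec i

/-- The composition `G_w = G_{j₁} ∘ ⋯ ∘ G_{jₙ}` along a word `w = (j₁, …, jₙ)`. -/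
noncomputable def Gword (p : ℝ) {n : ℕ} (w : Fin n → Fin 3) : E3 → E3 :=
  ((List.ofFn w).map (Gmap p)).foldr (· ∘ ·) id

/-- Summability of the double series `Σ_{n=1}^∞ Σ_{w ∈ {1,2,3}ⁿ} φ^s(C_w)`
(all terms are nonnegative, so summability is equivalent to finiteness of the sum). -/
def seriesSummable (p s : ℝ) : Prop :=
  Summable (fun x : Σ n : ℕ, (Fin (n+1) → Fin 3) => svf s (Cword p x.2))

/-- The affinity dimension `s₀ = inf{s > 0 : Σ_n Σ_w φ^s(C_w) < ∞}`. -/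
noncomputable def s0 (p : ℝ) : ℝ := sInf {s : ℝ | 0 < s ∧ seriesSummable p s}

/-- The minimal number of balls of radius `δ` needed to cover `A`. -/
noncomputable def coverNum (A : Set E3) (δ : ℝ) : ℕ :=
  sInf {n : ℕ | ∃ t : Finset E3, t.card = n ∧ A ⊆ ⋃ x ∈ t, Metric.ball x δ}

/-- The upper box-counting dimension `limsup_{δ→0⁺} log N_δ(A) / (−log δ)`. -/
noncomputable def upperBoxDim (A : Set E3) : ℝ :=
  Filter.limsup (fun δ : ℝ => Real.log (coverNum A δ) / (-Real.log δ))
    (nhdsWithin 0 (Set.Ioi 0))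

/-- The vector `(1,1,1)`. -/
noncomputable def onesVec : E3 := (WithLp.equiv 2 (Fin 3 → ℝ)).symm ![1, 1, 1]

/-- Orthogonal projection of `ℝ³` onto the plane `V = {x : x₁ + x₂ + x₃ = 0}`. -/
noncomputable def projV (x : E3) : E3 := x - (((x 0) + (x 1) + (x 2)) / 3) • onesVec

/-- The vector `(a,b,c)` in `E3`. -/
noncomputable def vec3 (a b c : ℝ) : E3 := (WithLp.equiv 2 (Fin 3 → ℝ)).symm ![a, b, c]

/-- The triangle `T₀ = conv{e₁, e₂, e₃}`. -/
noncomputable def T0set : Set E3 := convexHull ℝ {eVec 0, eVec 1, eVec 2}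

/-- The standard tetrahedron `W = conv{0, e₁, e₂, e₃}`. -/
noncomputable def Wset : Set E3 := convexHull ℝ {0, eVec 0, eVec 1, eVec 2}

/-- The triangle `T_ε = conv{(1−2ε,ε,ε), (ε,1−2ε,ε), (ε,ε,1−2ε)}`. -/
noncomputable def Ttri (ε : ℝ) : Set E3 :=
  convexHull ℝ {vec3 (1 - 2*ε) ε ε, vec3 ε (1 - 2*ε) ε, vec3 ε ε (1 - 2*ε)}

/-- Lemma (projection of the image of the plane `V` is comparable to `α₂`). -/
lemma e3_apply (A : Mat3) (x : E3) (i : Fin 3) :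
    matApply A x i = A i 0 * x 0 + A i 1 * x 1 + A i 2 * x 2 := by
  have : matApply A x = (WithLp.equiv _ _).symm (Matrix.toLin' A ((WithLp.equiv _ _) x)) := rfl
  rw [this]
  simp [Matrix.mulVec, dotProduct, Fin.sum_univ_three]

lemma e3_norm_sq (x : E3) : ‖x‖^2 = x 0^2 + x 1^2 + x 2^2 := by
  rw [EuclideanSpace.norm_eq, Real.sq_sqrt (by positivity)]
  simp [Fin.sum_univ_three, sq_abs]

lemma row_bound (a b c x0 x1 x2 n : ℝ) (ha : 0 ≤ a) (hb : 0 ≤ b) (hc : 0 ≤ c)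
    (h0 : x0^2 ≤ n^2) (h1 : x1^2 ≤ n^2) (h2 : x2^2 ≤ n^2) :
    (a*x0 + b*x1 + c*x2)^2 ≤ (a+b+c)^2 * n^2 := by
  have e01 : x0*x1 ≤ n^2 := by nlinarith [sq_nonneg (x0 - x1)]
  have e02 : x0*x2 ≤ n^2 := by nlinarith [sq_nonneg (x0 - x2)]
  have e12 : x1*x2 ≤ n^2 := by nlinarith [sq_nonneg (x1 - x2)]
  nlinarith [mul_le_mul_of_nonneg_left e01 (mul_nonneg ha hb),
    mul_le_mul_of_nonneg_left e02 (mul_nonneg ha hc),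
    mul_le_mul_of_nonneg_left e12 (mul_nonneg hb hc),
    mul_le_mul_of_nonneg_left h0 (mul_nonneg ha ha),
    mul_le_mul_of_nonneg_left h1 (mul_nonneg hb hb),
    mul_le_mul_of_nonneg_left h2 (mul_nonneg hc hc)]


lemma sum3_bound (A0 A1 A2 s0 s1 s2 n : ℝ) (hs0 : 0 ≤ s0) (hs1 : 0 ≤ s1) (hs2 : 0 ≤ s2)
    (hn : 0 ≤ n)
    (r0 : A0^2 ≤ s0^2 * n^2) (r1 : A1^2 ≤ s1^2 * n^2) (r2 : A2^2 ≤ s2^2 * n^2) :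
    A0^2 + A1^2 + A2^2 ≤ ((s0 + s1 + s2) * n)^2 := by
  nlinarith [mul_nonneg (mul_nonneg hs0 hs1) (sq_nonneg n),
    mul_nonneg (mul_nonneg hs0 hs2) (sq_nonneg n),
    mul_nonneg (mul_nonneg hs1 hs2) (sq_nonneg n)]

lemma opnorm_le_sum (M : Mat3) (h : ∀ i j, 0 ≤ M i j) :
    ‖Matrix.toEuclideanCLM (𝕜 := ℝ) M‖ ≤ ∑ i, ∑ j, M i j := by
  have hS : (0:ℝ) ≤ ∑ i, ∑ j, M i j :=
    Finset.sum_nonneg fun i _ => Finset.sum_nonneg fun j _ => h i j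
  refine ContinuousLinearMap.opNorm_le_bound _ hS fun x => ?_
  have hx0 : x 0 ^ 2 ≤ ‖x‖^2 := by rw [e3_norm_sq]; nlinarith [sq_nonneg (x 1), sq_nonneg (x 2)]
  have hx1 : x 1 ^ 2 ≤ ‖x‖^2 := by rw [e3_norm_sq]; nlinarith [sq_nonneg (x 0), sq_nonneg (x 2)]
  have hx2 : x 2 ^ 2 ≤ ‖x‖^2 := by rw [e3_norm_sq]; nlinarith [sq_nonneg (x 0), sq_nonneg (x 1)]
  have hsq : ‖Matrix.toEuclideanCLM (𝕜 := ℝ) M x‖^2 ≤ ((∑ i, ∑ j, M i j) * ‖x‖)^2 := by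
    rw [e3_norm_sq]
    have h0 := e3_apply M x 0
    have h1 := e3_apply M x 1
    have h2 := e3_apply M x 2
    simp only [matApply] at h0 h1 h2
    rw [h0, h1, h2, Fin.sum_univ_three, Fin.sum_univ_three, Fin.sum_univ_three,
      Fin.sum_univ_three]
    have r0 := row_bound (M 0 0) (M 0 1) (M 0 2) (x 0) (x 1) (x 2) ‖x‖
      (h 0 0) (h 0 1) (h 0 2) hx0 hx1 hx2
    have r1 := row_bound (M 1 0) (M 1 1) (M 1 2) (x 0) (x 1) (x 2) ‖x‖
      (h 1 0) (h 1 1) (h 1 2) hx0 hx1 hx2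
    have r2 := row_bound (M 2 0) (M 2 1) (M 2 2) (x 0) (x 1) (x 2) ‖x‖
      (h 2 0) (h 2 1) (h 2 2) hx0 hx1 hx2
    have s0 : (0:ℝ) ≤ M 0 0 + M 0 1 + M 0 2 := by
      have := h 0 0; have := h 0 1; have := h 0 2; linarith
    have s1 : (0:ℝ) ≤ M 1 0 + M 1 1 + M 1 2 := by
      have := h 1 0; have := h 1 1; have := h 1 2; linarith
    have s2 : (0:ℝ) ≤ M 2 0 + M 2 1 + M 2 2 := by
      have := h 2 0; have := h 2 1; have := h 2 2; linarith
    exact sum3_bound _ _ _ _ _ _ _ s0 s1 s2 (norm_nonneg x) r0 r1 r2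
  exact (abs_le_of_sq_le_sq' hsq (by positivity)).2

lemma vec3_apply_zero (a b c : ℝ) : vec3 a b c 0 = a := rfl
lemma vec3_apply_one (a b c : ℝ) : vec3 a b c 1 = b := rfl
lemma vec3_apply_two (a b c : ℝ) : vec3 a b c 2 = c := rfl

open scoped Matrix.Norms.L2Operator in
set_option maxHeartbeats 1000000 in
theorem proj_image_lower_bound' :
    ∃ c : ℝ, 0 < c ∧ ∀ B : Mat3, IsUnit B → (∀ i j, 0 ≤ B⁻¹ i j) →
      ∀ w : E3, w 0 + w 1 + w 2 = 0 →
        c * sv2 B * ‖w‖ ≤ ‖projV (matApply B w)‖ := by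
  refine ⟨1/3, by norm_num, ?_⟩
  intro B hB hpos w hw
  set N1 : ℝ := ‖Matrix.toEuclideanCLM (𝕜 := ℝ) B‖ with hN1
  set Ni : ℝ := ‖Matrix.toEuclideanCLM (𝕜 := ℝ) B⁻¹‖ with hNi
  have hdet : IsUnit B.det := (Matrix.isUnit_iff_isUnit_det B).mp hB
  have hinv : B⁻¹ * B = 1 := Matrix.nonsing_inv_mul B hdet
  have hinv2 : B * B⁻¹ = 1 := Matrix.mul_nonsing_inv B hdet
  have hadj : B.adjugate = B.det • B⁻¹ := by
    calc B.adjugate = (B⁻¹ * B) * B.adjugate := by rw [hinv, one_mul]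
    _ = B⁻¹ * (B * B.adjugate) := by rw [Matrix.mul_assoc]
    _ = B⁻¹ * (B.det • 1) := by rw [Matrix.mul_adjugate]
    _ = B.det • B⁻¹ := by rw [Matrix.mul_smul, Matrix.mul_one]
  -- positivity of norms
  have hcomp : (1:ℝ) ≤ N1 * Ni := by
    have h1 : Matrix.toEuclideanCLM (𝕜 := ℝ) B * Matrix.toEuclideanCLM (𝕜 := ℝ) B⁻¹ = 1 := by
      rw [← _root_.map_mul, hinv2, _root_.map_one]
    have h2 : ‖(1 : E3 →L[ℝ] E3)‖ = 1 := ContinuousLinearMap.norm_id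
    calc (1:ℝ) = ‖(1 : E3 →L[ℝ] E3)‖ := h2.symm
    _ = ‖Matrix.toEuclideanCLM (𝕜 := ℝ) B * Matrix.toEuclideanCLM (𝕜 := ℝ) B⁻¹‖ := by rw [h1]
    _ ≤ N1 * Ni := norm_mul_le _ _
  have hN1nn : 0 ≤ N1 := by rw [hN1]; exact norm_nonneg _
  have hNinn : 0 ≤ Ni := by rw [hNi]; exact norm_nonneg _
  have hN1pos : 0 < N1 := by nlinarith
  have hNipos : 0 < Ni := by nlinarith
  -- the sum of the entries of the inverse
  set q : ℝ := ∑ i, ∑ j, B⁻¹ i j with hq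
  have hqN : Ni ≤ q := opnorm_le_sum _ hpos
  have hq0 : 0 < q := lt_of_lt_of_le hNipos hqN
  -- the sum of the entries of the adjugate
  set Qa : ℝ := ∑ i, ∑ j, B.adjugate i j with hQa
  have hQaq : Qa = B.det * q := by
    rw [hQa, hq, Finset.mul_sum]
    refine Finset.sum_congr rfl fun i _ => ?_
    rw [Finset.mul_sum]
    refine Finset.sum_congr rfl fun j _ => ?_
    rw [hadj, Matrix.smul_apply, smul_eq_mul]
  -- coordinates
  set u : E3 := matApply B w with hu
  set y : E3 := projV u with hy
  have hyc : ∀ i : Fin 3, y i = u i - (u 0 + u 1 + u 2)/3 := by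
    intro i
    have : y i = u i - ((u 0 + u 1 + u 2)/3) * (onesVec i) := rfl
    rw [this]
    have ho : onesVec i = 1 := by fin_cases i <;> rfl
    rw [ho, mul_one]
  have hysum : y 0 + y 1 + y 2 = 0 := by rw [hyc 0, hyc 1, hyc 2]; ring
  set v : E3 := vec3 (y 1 - y 2) (y 2 - y 0) (y 0 - y 1) with hv
  set z : E3 := matApply Bᵀ v with hz
  have hzc : ∀ i : Fin 3, z i =
      B 0 i * (y 1 - y 2) + B 1 i * (y 2 - y 0) + B 2 i * (y 0 - y 1) := by
    intro i
    rw [hz, e3_apply, hv, vec3_apply_zero, vec3_apply_one, vec3_apply_two]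
    simp [Matrix.transpose_apply]
  -- the key algebraic identity
  have hw2 : w 2 = - w 0 - w 1 := by linarith
  have hQaExp : Qa =
      (B 1 1 * B 2 2 - B 1 2 * B 2 1) + (B 0 2 * B 2 1 - B 0 1 * B 2 2)
        + (B 0 1 * B 1 2 - B 0 2 * B 1 1)
      + (B 1 2 * B 2 0 - B 1 0 * B 2 2) + (B 0 0 * B 2 2 - B 0 2 * B 2 0)
        + (B 0 2 * B 1 0 - B 0 0 * B 1 2)
      + (B 1 0 * B 2 1 - B 1 1 * B 2 0) + (B 0 1 * B 2 0 - B 0 0 * B 2 1)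
        + (B 0 0 * B 1 1 - B 0 1 * B 1 0) := by
    rw [hQa, Fin.sum_univ_three]
    rw [Fin.sum_univ_three, Fin.sum_univ_three, Fin.sum_univ_three]
    rw [Matrix.adjugate_fin_three]
    norm_num
    simp
    ring
  have key0 : Qa * w 0 = z 2 - z 1 := by
    rw [hQaExp, hzc 1, hzc 2, hyc 0, hyc 1, hyc 2,
      hu, e3_apply, e3_apply, e3_apply, hw2]
    ring
  have key1 : Qa * w 1 = z 0 - z 2 := by
    rw [hQaExp, hzc 0, hzc 2, hyc 0, hyc 1, hyc 2,
      hu, e3_apply, e3_apply, e3_apply, hw2]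
    ring
  have key2 : Qa * w 2 = z 1 - z 0 := by
    rw [hQaExp, hzc 0, hzc 1, hyc 0, hyc 1, hyc 2,
      hu, e3_apply, e3_apply, e3_apply, hw2]
    ring
  -- norm computations
  have hvnorm : ‖v‖^2 = 3 * ‖y‖^2 := by
    rw [e3_norm_sq, e3_norm_sq, hv, vec3_apply_zero, vec3_apply_one, vec3_apply_two]
    linear_combination (- (y 0 + y 1 + y 2)) * hysum
  have hznorm : ‖z‖ ≤ N1 * ‖v‖ := by
    have hT : Bᵀ = Bᴴ := by
      ext i j; simp [Matrix.conjTranspose_apply]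
    have hTn : ‖Matrix.toEuclideanCLM (𝕜 := ℝ) Bᵀ‖ = N1 := by
      rw [hN1, ← Matrix.cstar_norm_def, ← Matrix.cstar_norm_def, hT,
        Matrix.l2_opNorm_conjTranspose]
    calc ‖z‖ ≤ ‖Matrix.toEuclideanCLM (𝕜 := ℝ) Bᵀ‖ * ‖v‖ :=
      (Matrix.toEuclideanCLM (𝕜 := ℝ) Bᵀ).le_opNorm v
    _ = N1 * ‖v‖ := by rw [hTn]
  have hQw : Qa • w = vec3 (z 2 - z 1) (z 0 - z 2) (z 1 - z 0) := by
    refine PiLp.ext fun i => ?_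
    fin_cases i
    · simpa [vec3] using key0
    · simpa [vec3] using key1
    · simpa [vec3] using key2
  clear_value N1 Ni q Qa u y v z
  have hmain : |B.det| * q * ‖w‖ ≤ 3 * N1 * ‖y‖ := by
    have hl : |B.det| * q * ‖w‖ = ‖Qa • w‖ := by
      rw [norm_smul, hQaq]
      rw [Real.norm_eq_abs, abs_mul, abs_of_pos hq0]
    have hr2 : ‖Qa • w‖^2 ≤ (3 * N1 * ‖y‖)^2 := by
      rw [hQw, e3_norm_sq, vec3_apply_zero, vec3_apply_one, vec3_apply_two]
      have hcr : (z 2 - z 1)^2 + (z 0 - z 2)^2 + (z 1 - z 0)^2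
          ≤ 3 * (z 0^2 + z 1^2 + z 2^2) := by
        nlinarith [sq_nonneg (z 0 + z 1 + z 2)]
      have hz2 : ‖z‖^2 ≤ (N1 * ‖v‖)^2 :=
        pow_le_pow_left₀ (norm_nonneg z) hznorm 2
      rw [e3_norm_sq] at hz2
      have hz3 : z 0^2 + z 1^2 + z 2^2 ≤ N1^2 * (3 * ‖y‖^2) := by
        rw [mul_pow, hvnorm] at hz2
        linarith
      nlinarith [hcr, hz3]
    rw [hl]
    have h3 : (0:ℝ) ≤ 3 * N1 * ‖y‖ := by positivity
    exact (abs_le_of_sq_le_sq' hr2 h3).2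
  -- conclusion
  have hfin : |B.det| * Ni * ‖w‖ ≤ 3 * N1 * ‖y‖ := by
    refine le_trans ?_ hmain
    have : |B.det| * Ni ≤ |B.det| * q :=
      mul_le_mul_of_nonneg_left hqN (abs_nonneg _)
    exact mul_le_mul_of_nonneg_right this (norm_nonneg w)
  have hsv : sv2 B = |B.det| * Ni / N1 := by
    rw [sv2, sv1, sv3, ← hN1, ← hNi]
    field_simp
  rw [hsv]
  calc 1/3 * (|B.det| * Ni / N1) * ‖w‖
      = (|B.det| * Ni * ‖w‖) / (3 * N1) := by field_simp
  _ ≤ (3 * N1 * ‖y‖) / (3 * N1) := by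
      have h3N : (0:ℝ) < 3 * N1 := by linarith
      exact (div_le_div_iff_of_pos_right h3N).mpr hfin
  _ = ‖y‖ := by field_simp

theorem proj_image_lower_bound :
    ∃ c : ℝ, 0 < c ∧ ∀ B : Mat3, IsUnit B → (∀ i j, 0 ≤ B⁻¹ i j) →
      ∀ w : E3, w 0 + w 1 + w 2 = 0 →
        c * sv2 B * ‖w‖ ≤ ‖projV (matApply B w)‖ := by
  exact proj_image_lower_bound'
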